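/- For all P, Q ∈ pCSP: (1) if P ⊑^L Q then P ⊑_S Q; (2) if P ⊑^F Q then P ⊑_FS Q. -/

import Mathlib

open Classical

noncomputable section

namespace PaperPCSP

/-! ### Finitely supported distributions as weight functions -/

/-- Weight functions on `X`; probability distributions are those satisfying `IsDist`. -/
abbrev Wt (X : Type) := X → ℝ

/-- The support of a weight function. -/
def dsupp {X : Type} (Δ : Wt X) : Set X := Function.support Δ

/-- `Δ` is a finitely supported probability distribution. -/
def IsDist {X : Type} (Δ : Wt X) : Prop :=
  (∀ x, 0 ≤ Δ x) ∧ (dsupp Δ).Finite ∧ ∑ᶠ x, Δ x = 1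

/-- The point distribution at `x`. -/
def dirac {X : Type} (x : X) : Wt X := fun y => if y = x then 1 else 0

/-- Pushforward of a weight function along a map. -/
def dmap {X Y : Type} (g : X → Y) (Δ : Wt X) : Wt Y :=
  fun y => ∑ᶠ x ∈ {x | g x = y}, Δ x

/-- Expected value of `f` under `Δ`. -/
def dexp {X : Type} (Δ : Wt X) (f : X → ℝ) : ℝ := ∑ᶠ x, Δ x * f x

/-! ### Syntax of pCSP -/

mutual
/-- Process terms of pCSP (over prefix alphabet `A`). -/
inductive PCSP (A : Type) : Type where
  | st : SCSP A → PCSP A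
  | pch : ℝ → PCSP A → PCSP A → PCSP A
/-- State-based process terms of pCSP. -/
inductive SCSP (A : Type) : Type where
  | nil : SCSP A
  | pre : A → PCSP A → SCSP A
  | ich : PCSP A → PCSP A → SCSP A
  | ech : SCSP A → SCSP A → SCSP A
  | par : Set A → SCSP A → SCSP A → SCSP A
end

mutual
/-- Well-formedness: all probabilistic choices have `p ∈ (0,1)`.  `pCSP` proper
consists of the well-formed terms. -/
inductive PWF : {A : Type} → PCSP A → Prop where
  | st {A} {s : SCSP A} : SWF s → PWF (.st s)
  | pch {A} {p : ℝ} {P Q : PCSP A} : 0 < p → p < 1 → PWF P → PWF Q → PWF (.pch p P Q)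
inductive SWF : {A : Type} → SCSP A → Prop where
  | nil {A} : SWF (SCSP.nil (A := A))
  | pre {A} {a : A} {P} : PWF P → SWF (.pre a P)
  | ich {A} {P Q : PCSP A} : PWF P → PWF Q → SWF (.ich P Q)
  | ech {A} {s t : SCSP A} : SWF s → SWF t → SWF (.ech s t)
  | par {A} {B : Set A} {s t : SCSP A} : SWF s → SWF t → SWF (.par B s t)
end

/-- Interpretation of process terms as distributions over state-based terms. -/
def PCSP.interp {A : Type} : PCSP A → Wt (SCSP A)
  | .st s => dirac s
  | .pch p P Q => fun t => p * P.interp t + (1 - p) * Q.interp t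

/-! ### Operational semantics -/

/-- The probabilistic labelled transition relation; `none` is the internal action τ. -/
inductive Step {A : Type} : SCSP A → Option A → Wt (SCSP A) → Prop where
  | pre (a : A) (P : PCSP A) : Step (.pre a P) (some a) P.interp
  | ichL (P Q : PCSP A) : Step (.ich P Q) none P.interp
  | ichR (P Q : PCSP A) : Step (.ich P Q) none Q.interp
  | echL {s₁ s₂ : SCSP A} {a : A} {Δ} :
      Step s₁ (some a) Δ → Step (.ech s₁ s₂) (some a) Δ
  | echR {s₁ s₂ : SCSP A} {a : A} {Δ} :
      Step s₂ (some a) Δ → Step (.ech s₁ s₂) (some a) Δ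
  | echTL {s₁ s₂ : SCSP A} {Δ} :
      Step s₁ none Δ → Step (.ech s₁ s₂) none (dmap (fun t => .ech t s₂) Δ)
  | echTR {s₁ s₂ : SCSP A} {Δ} :
      Step s₂ none Δ → Step (.ech s₁ s₂) none (dmap (fun t => .ech s₁ t) Δ)
  | parL {B : Set A} {s₁ s₂ : SCSP A} {α : Option A} {Δ} :
      Step s₁ α Δ → (∀ a, α = some a → a ∉ B) →
      Step (.par B s₁ s₂) α (dmap (fun t => .par B t s₂) Δ)
  | parR {B : Set A} {s₁ s₂ : SCSP A} {α : Option A} {Δ} :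
      Step s₂ α Δ → (∀ a, α = some a → a ∉ B) →
      Step (.par B s₁ s₂) α (dmap (fun t => .par B s₁ t) Δ)
  | parS {B : Set A} {s₁ s₂ : SCSP A} {a : A} {Δ₁ Δ₂} :
      a ∈ B → Step s₁ (some a) Δ₁ → Step s₂ (some a) Δ₂ →
      Step (.par B s₁ s₂) none
        (dmap (fun q : SCSP A × SCSP A => .par B q.1 q.2) (fun q => Δ₁ q.1 * Δ₂ q.2))

/-! ### Lifting relations to distributions, weak transitions -/

/-- Lifting of a state-vs-distribution relation to distributions. -/
def Lift {A : Type} (R : SCSP A → Wt (SCSP A) → Prop) (Δ Θ : Wt (SCSP A)) : Prop :=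
  ∃ (n : ℕ) (p : Fin n → ℝ) (s : Fin n → SCSP A) (Φ : Fin n → Wt (SCSP A)),
    (∀ i, 0 ≤ p i) ∧ (∑ i, p i = 1) ∧
    (Δ = fun t => ∑ i, p i * dirac (s i) t) ∧
    (∀ i, R (s i) (Φ i)) ∧
    (Θ = fun t => ∑ i, p i * Φ i t)

/-- The transition relation lifted to distributions. -/
def StepD {A : Type} (α : Option A) : Wt (SCSP A) → Wt (SCSP A) → Prop :=
  Lift (fun s Δ => Step s α Δ)

/-- `s --τ̂--> Δ` : a τ-step or staying put. -/
def stepTauHat {A : Type} (s : SCSP A) (Δ : Wt (SCSP A)) : Prop :=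
  Step s none Δ ∨ Δ = dirac s

/-- `==τ̂==>` : reflexive-transitive closure of the lifted `--τ̂-->`. -/
def TauStar {A : Type} : Wt (SCSP A) → Wt (SCSP A) → Prop :=
  Relation.ReflTransGen (Lift stepTauHat)

/-- `Δ ==â==> Θ` for a visible action `a`. -/
def WeakA {A : Type} (a : A) (Δ Θ : Wt (SCSP A)) : Prop :=
  ∃ Δ₁ Δ₂, TauStar Δ Δ₁ ∧ StepD (some a) Δ₁ Δ₂ ∧ TauStar Δ₂ Θ

/-- `Δ ==α̂==> Θ`, which is `==τ̂==>` when `α = τ`. -/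
def Weak {A : Type} : Option A → Wt (SCSP A) → Wt (SCSP A) → Prop
  | none => TauStar
  | some a => WeakA a

/-- `s ↛X` : the state `s` enables no action from `X ∪ {τ}`. -/
def SRefuses {A : Type} (s : SCSP A) (X : Set A) : Prop :=
  (∀ Δ, ¬ Step s none Δ) ∧ ∀ a ∈ X, ∀ Δ, ¬ Step s (some a) Δ

/-- `Δ ↛X` : every state in the support of `Δ` refuses `X`. -/
def DRefuses {A : Type} (Δ : Wt (SCSP A)) (X : Set A) : Prop :=
  ∀ s ∈ dsupp Δ, SRefuses s X

/-! ### Simulation and failure simulation -/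

/-- `R` is a simulation. -/
def IsSimulation {A : Type} (R : SCSP A → Wt (SCSP A) → Prop) : Prop :=
  ∀ s Θ α Δ, R s Θ → Step s α Δ → ∃ Θ', Weak α Θ Θ' ∧ Lift R Δ Θ'

/-- `R` is a failure simulation. -/
def IsFailureSim {A : Type} (R : SCSP A → Wt (SCSP A) → Prop) : Prop :=
  IsSimulation R ∧
  ∀ s Θ (X : Set A), R s Θ → SRefuses s X → ∃ Θ', TauStar Θ Θ' ∧ DRefuses Θ' X

/-- `s ⊲_S Θ`. -/
def simLE {A : Type} (s : SCSP A) (Θ : Wt (SCSP A)) : Prop :=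
  ∃ R, IsSimulation R ∧ R s Θ

/-- `s ⊲_FS Θ`. -/
def fsimLE {A : Type} (s : SCSP A) (Θ : Wt (SCSP A)) : Prop :=
  ∃ R, IsFailureSim R ∧ R s Θ

/-- The simulation preorder `P ⊑_S Q`. -/
def SimPre {A : Type} (P Q : PCSP A) : Prop :=
  ∃ Θ, TauStar Q.interp Θ ∧ Lift simLE P.interp Θ

/-- The failure simulation preorder `P ⊑_FS Q`. -/
def FSimPre {A : Type} (P Q : PCSP A) : Prop :=
  ∃ Θ, TauStar P.interp Θ ∧ Lift fsimLE Q.interp Θ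
/-! ### Syntactic operations: renaming, and ◻ / ∥ distributed over probabilistic choice -/

mutual
/-- Renaming of actions in a process term. -/
def mapP {A B : Type} (f : A → B) : PCSP A → PCSP B
  | .st s => .st (mapS f s)
  | .pch p P Q => .pch p (mapP f P) (mapP f Q)
def mapS {A B : Type} (f : A → B) : SCSP A → SCSP B
  | .nil => .nil
  | .pre a P => .pre (f a) (mapP f P)
  | .ich P Q => .ich (mapP f P) (mapP f Q)
  | .ech s t => .ech (mapS f s) (mapS f t)
  | .par X s t => .par (f '' X) (mapS f s) (mapS f t)
end

/-- `s ∥_B Q` for a state `s`, distributing over probabilistic choice. -/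
def parCS {A : Type} (B : Set A) (s : SCSP A) : PCSP A → PCSP A
  | .st t => .st (.par B s t)
  | .pch p Q₁ Q₂ => .pch p (parCS B s Q₁) (parCS B s Q₂)

/-- `P ∥_B Q` on processes, distributing over probabilistic choice. -/
def parC {A : Type} (B : Set A) : PCSP A → PCSP A → PCSP A
  | .st s, Q => parCS B s Q
  | .pch p P₁ P₂, Q => .pch p (parC B P₁ Q) (parC B P₂ Q)

/-- `s ◻ Q` for a state `s`, distributing over probabilistic choice. -/
def echCS {A : Type} (s : SCSP A) : PCSP A → PCSP A
  | .st t => .st (.ech s t)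
  | .pch p Q₁ Q₂ => .pch p (echCS s Q₁) (echCS s Q₂)

/-- `P ◻ Q` on processes, distributing over probabilistic choice. -/
def echC {A : Type} : PCSP A → PCSP A → PCSP A
  | .st s, Q => echCS s Q
  | .pch p P₁ P₂, Q => .pch p (echC P₁ Q) (echC P₂ Q)

/-- Finite (nonempty) indexed internal choice `⨅_{i} P i`. -/
def ichFin {A : Type} : (n : ℕ) → (Fin (n+1) → PCSP A) → PCSP A
  | 0, P => P 0
  | n+1, P => .st (.ich (P 0) (ichFin n (fun i => P i.succ)))

/-- Finite (nonempty) indexed probabilistic choice `⊕_{i} p i · P i`. -/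
def pchFin {A : Type} : (n : ℕ) → (Fin (n+1) → ℝ) → (Fin (n+1) → PCSP A) → PCSP A
  | 0, _, P => P 0
  | n+1, p, P => .pch (p 0) (P 0)
      (pchFin n (fun i => p i.succ / (1 - p 0)) (fun i => P i.succ))

/-- Finite (nonempty) indexed external choice of states `◻_{i} s i`. -/
def echFin {A : Type} : (n : ℕ) → (Fin (n+1) → SCSP A) → SCSP A
  | 0, s => s 0
  | n+1, s => .ech (s 0) (echFin n (fun i => s i.succ))

/-- External choice of a list of states (empty list gives `0`). -/
def echList {A : Type} : List (SCSP A) → SCSP A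
  | [] => .nil
  | s :: l => .ech s (echList l)

/-! ### State-based scalar testing -/

/-- The alphabet `Act ∪ {ω}` for ordinary (scalar) tests. -/
abbrev TAct (A : Type) := Sum A Unit

/-- The success action ω. -/
def omA {A : Type} : TAct A := Sum.inr ()

/-- Membership in the state-based results-gathering function `V` (with success action `w`). -/
inductive VMem {B : Type} (w : B) : SCSP B → ℝ → Prop where
  | succ {s : SCSP B} {Δ} : Step s (some w) Δ → VMem w s 1
  | step {s : SCSP B} {α : Option B} {Δ} (f : SCSP B → ℝ) :
      (∀ Θ, ¬ Step s (some w) Θ) → Step s α Δ →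
      (∀ t ∈ dsupp Δ, VMem w t (f t)) → VMem w s (dexp Δ f)
  | stuck {s : SCSP B} : (∀ α Δ, ¬ Step s α Δ) → VMem w s 0

/-- `V(Δ)` : the set of outcomes of a distribution, via choice functions. -/
def VD {B : Type} (w : B) (Δ : Wt (SCSP B)) : Set ℝ :=
  {r | ∃ f : SCSP B → ℝ, (∀ t ∈ dsupp Δ, VMem w t (f t)) ∧ r = dexp Δ f}

/-- The application `T ∥_Act P` of a test to a process. -/
def applyTest {A : Type} (T : PCSP (TAct A)) (P : PCSP A) : PCSP (TAct A) :=
  parC (Set.range Sum.inl) T (mapP Sum.inl P)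

/-- `A(T,P)` : state-based testing outcomes. -/
def Aset {A : Type} (T : PCSP (TAct A)) (P : PCSP A) : Set ℝ :=
  VD omA (applyTest T P).interp

/-- The Hoare preorder on sets of reals. -/
def HoareLE (X Y : Set ℝ) : Prop := ∀ x ∈ X, ∃ y ∈ Y, x ≤ y

/-- The Smyth preorder on sets of reals. -/
def SmythLE (X Y : Set ℝ) : Prop := ∀ y ∈ Y, ∃ x ∈ X, x ≤ y

/-- The may-testing preorder `⊑_pmay`. -/
def PMay {A : Type} (P Q : PCSP A) : Prop :=
  ∀ T : PCSP (TAct A), PWF T → HoareLE (Aset T P) (Aset T Q)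

/-- The must-testing preorder `⊑_pmust`. -/
def PMust {A : Type} (P Q : PCSP A) : Prop :=
  ∀ T : PCSP (TAct A), PWF T → SmythLE (Aset T P) (Aset T Q)

/-! ### Action-based scalar testing -/

/-- Membership in the action-based results-gathering function `V̄`. -/
inductive VBarMem {B : Type} (w : B) : SCSP B → ℝ → Prop where
  | succ {s : SCSP B} {Δ} : Step s (some w) Δ → VBarMem w s 1
  | step {s : SCSP B} {α : Option B} {Δ} (f : SCSP B → ℝ) :
      α ≠ some w → Step s α Δ →
      (∀ t ∈ dsupp Δ, VBarMem w t (f t)) → VBarMem w s (dexp Δ f)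
  | stuck {s : SCSP B} : (∀ α Δ, ¬ Step s α Δ) → VBarMem w s 0

/-- `V̄(Δ)`. -/
def VBarD {B : Type} (w : B) (Δ : Wt (SCSP B)) : Set ℝ :=
  {r | ∃ f : SCSP B → ℝ, (∀ t ∈ dsupp Δ, VBarMem w t (f t)) ∧ r = dexp Δ f}

/-- `Ā(T,P)` : action-based testing outcomes. -/
def AsetBar {A : Type} (T : PCSP (TAct A)) (P : PCSP A) : Set ℝ :=
  VBarD omA (applyTest T P).interp

/-- The action-based may-testing preorder `⊑̄_pmay`. -/
def PMayBar {A : Type} (P Q : PCSP A) : Prop :=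
  ∀ T : PCSP (TAct A), PWF T → HoareLE (AsetBar T P) (AsetBar T Q)

/-- The action-based must-testing preorder `⊑̄_pmust`. -/
def PMustBar {A : Type} (P Q : PCSP A) : Prop :=
  ∀ T : PCSP (TAct A), PWF T → SmythLE (AsetBar T P) (AsetBar T Q)
/-! ### ω-avoiding transitions and the relation ⊲ᵉ_FS -/

/-- `s --α-->_ω Δ` : a transition from a state not enabling the success action `w`. -/
def StepOmega {B : Type} (w : B) (s : SCSP B) (α : Option B) (Δ : Wt (SCSP B)) : Prop :=
  (∀ Θ, ¬ Step s (some w) Θ) ∧ Step s α Δ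

/-- `s --τ̂-->_ω Δ`. -/
def stepTauHatOm {B : Type} (w : B) (s : SCSP B) (Δ : Wt (SCSP B)) : Prop :=
  StepOmega w s none Δ ∨ Δ = dirac s

/-- `==τ̂==>_ω`. -/
def TauStarOm {B : Type} (w : B) : Wt (SCSP B) → Wt (SCSP B) → Prop :=
  Relation.ReflTransGen (Lift (stepTauHatOm w))

/-- `==â==>_ω` for a visible action `a`. -/
def WeakAOm {B : Type} (w : B) (a : B) (Δ Θ : Wt (SCSP B)) : Prop :=
  ∃ Δ₁ Δ₂, TauStarOm w Δ Δ₁ ∧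
    Lift (fun s Φ => StepOmega w s (some a) Φ) Δ₁ Δ₂ ∧ TauStarOm w Δ₂ Θ

/-- `==α̂==>_ω`. -/
def WeakOm {B : Type} (w : B) : Option B → Wt (SCSP B) → Wt (SCSP B) → Prop
  | none => TauStarOm w
  | some a => WeakAOm w a

/-- A postfixed point for the coinductive definition of `⊲ᵉ_FS`. -/
def IsEFailSim {B : Type} (w : B) (R : SCSP B → Wt (SCSP B) → Prop) : Prop :=
  (∀ s Θ α Δ, R s Θ → StepOmega w s α Δ → ∃ Θ', WeakOm w α Θ Θ' ∧ Lift R Δ Θ') ∧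
  (∀ s Θ (X : Set B), R s Θ → w ∈ X → SRefuses s X →
    ∃ Θ', TauStarOm w Θ Θ' ∧ DRefuses Θ' X)

/-- `s ⊲ᵉ_FS Θ` : the largest relation satisfying the transfer properties. -/
def efsimLE {B : Type} (w : B) (s : SCSP B) (Θ : Wt (SCSP B)) : Prop :=
  ∃ R, IsEFailSim w R ∧ R s Θ

/-! ### Vector-based testing with success actions from Ω -/

/-- `α!o` : update the `α`-component of the outcome tuple to 1 if `α` is a success action. -/
def bang {A Om : Type} (α : Option (Sum A Om)) (o : Om → ℝ) : Om → ℝ :=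
  fun w => if α = some (Sum.inr w) then 1 else o w

mutual
/-- Membership in the vector-based convex-closed results-gathering function `V̄↕^Ω`
for states.  -/
inductive WMem : {A Om : Type} → SCSP (Sum A Om) → (Om → ℝ) → Prop where
  | stuck {A Om : Type} {s : SCSP (Sum A Om)} :
      (∀ α Δ, ¬ Step s α Δ) → WMem s (fun _ => 0)
  | step {A Om : Type} {s : SCSP (Sum A Om)} {n : ℕ}
      (p : Fin (n+1) → ℝ) (α : Fin (n+1) → Option (Sum A Om))
      (Δ : Fin (n+1) → Wt (SCSP (Sum A Om))) (o : Fin (n+1) → Om → ℝ) :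
      (∀ i, 0 ≤ p i) → (∑ i, p i = 1) →
      (∀ i, Step s (α i) (Δ i)) →
      (∀ i, WMemD (Δ i) (o i)) →
      WMem s (fun w => ∑ i, p i * bang (α i) (o i) w)
/-- Membership in `V̄↕^Ω` for distributions. -/
inductive WMemD : {A Om : Type} → Wt (SCSP (Sum A Om)) → (Om → ℝ) → Prop where
  | mk {A Om : Type} {Δ : Wt (SCSP (Sum A Om))} (f : SCSP (Sum A Om) → Om → ℝ) :
      (∀ t ∈ dsupp Δ, WMem t (f t)) → WMemD Δ (fun w => ∑ᶠ t, Δ t * f t w)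
end

/-- `V̄↕^Ω(Δ)` as a set of outcome tuples. -/
def WsetD {A Om : Type} (Δ : Wt (SCSP (Sum A Om))) : Set (Om → ℝ) :=
  {o | WMemD Δ o}

/-- The application `T ∥_Act P` of an Ω-test to a process. -/
def applyTestO {A Om : Type} (T : PCSP (Sum A Om)) (P : PCSP A) : PCSP (Sum A Om) :=
  parC (Set.range Sum.inl) T (mapP Sum.inl P)

/-- `A↕^Ω(T,P)` : vector-based testing outcomes of a process. -/
def AO {A Om : Type} (T : PCSP (Sum A Om)) (P : PCSP A) : Set (Om → ℝ) :=
  WsetD (applyTestO T P).interp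

/-- `A↕^Ω(T,Δ)` for a distribution `Δ ∈ D(sCSP)`, via expected values. -/
def AOD {A Om : Type} (T : PCSP (Sum A Om)) (Δ : Wt (SCSP A)) : Set (Om → ℝ) :=
  {o | ∃ g : SCSP A → Om → ℝ,
    (∀ s ∈ dsupp Δ, g s ∈ AO T (.st s)) ∧ o = fun w => ∑ᶠ s, Δ s * g s w}

/-- Hoare preorder on sets of outcome tuples (componentwise order). -/
def HoareLEV {Om : Type} (X Y : Set (Om → ℝ)) : Prop := ∀ x ∈ X, ∃ y ∈ Y, x ≤ y

/-- Smyth preorder on sets of outcome tuples (componentwise order). -/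
def SmythLEV {Om : Type} (X Y : Set (Om → ℝ)) : Prop := ∀ y ∈ Y, ∃ x ∈ X, x ≤ y

/-- The vector-based may-testing preorder `⊑̄^Ω_pmay`. -/
def PMayO {A : Type} (Om : Type) (P Q : PCSP A) : Prop :=
  ∀ T : PCSP (Sum A Om), PWF T → HoareLEV (AO T P) (AO T Q)

/-- The vector-based must-testing preorder `⊑̄^Ω_pmust`. -/
def PMustO {A : Type} (Om : Type) (P Q : PCSP A) : Prop :=
  ∀ T : PCSP (Sum A Om), PWF T → SmythLEV (AO T P) (AO T Q)

/-- The unit outcome vector `ω⃗`. -/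
def unitVec {Om : Type} (w : Om) : Om → ℝ := fun w' => if w' = w then 1 else 0

/-! Occurrence of an action in a process term. -/
mutual
/-- Occurrence of an action in a process term. -/
inductive PUses : {B : Type} → B → PCSP B → Prop where
  | st {B : Type} {b : B} {s} : SUses b s → PUses b (.st s)
  | pchL {B : Type} {b : B} {p P Q} : PUses b P → PUses b (.pch p P Q)
  | pchR {B : Type} {b : B} {p P Q} : PUses b Q → PUses b (.pch p P Q)
inductive SUses : {B : Type} → B → SCSP B → Prop where
  | preAct {B : Type} {b : B} {P} : SUses b (.pre b P)
  | pre {B : Type} {b : B} {a P} : PUses b P → SUses b (.pre a P)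
  | ichL {B : Type} {b : B} {P Q} : PUses b P → SUses b (.ich P Q)
  | ichR {B : Type} {b : B} {P Q} : PUses b Q → SUses b (.ich P Q)
  | echL {B : Type} {b : B} {s t} : SUses b s → SUses b (.ech s t)
  | echR {B : Type} {b : B} {s t} : SUses b t → SUses b (.ech s t)
  | parSet {B : Type} {b : B} {X s t} : b ∈ X → SUses b (.par X s t)
  | parL {B : Type} {b : B} {X s t} : SUses b s → SUses b (.par X s t)
  | parR {B : Type} {b : B} {X s t} : SUses b t → SUses b (.par X s t)
end
/-! ### The modal logic F -/

/-- Modal formulae of the logic `F`. -/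
inductive Form (A : Type) : Type where
  | ref : Set A → Form A
  | dia : A → Form A → Form A
  | conj : (n : ℕ) → (Fin n → Form A) → Form A
  | prob : (n : ℕ) → (Fin n → ℝ) → (Fin n → Form A) → Form A

/-- Well-formed formulae: probabilistic choices carry genuine distributions. -/
inductive WFF {A : Type} : Form A → Prop where
  | ref {X} : WFF (.ref X)
  | dia {a φ} : WFF φ → WFF (.dia a φ)
  | conj {n φs} : (∀ i, WFF (φs i)) → WFF (.conj n φs)
  | prob {n p φs} : (∀ i, 0 ≤ p i) → (∑ i, p i = 1) →
      (∀ i, WFF (φs i)) → WFF (.prob n p φs)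

/-- Formulae of the sublogic `L`: no refusal construct. -/
inductive NoRef {A : Type} : Form A → Prop where
  | dia {a φ} : NoRef φ → NoRef (.dia a φ)
  | conj {n φs} : (∀ i, NoRef (φs i)) → NoRef (.conj n φs)
  | prob {n p φs} : (∀ i, NoRef (φs i)) → NoRef (.prob n p φs)

/-- The satisfaction relation `Δ ⊨ φ`. -/
inductive Sat {A : Type} : Form A → Wt (SCSP A) → Prop where
  | ref {X : Set A} {Δ Δ'} : TauStar Δ Δ' → DRefuses Δ' X → Sat (.ref X) Δ
  | dia {a φ Δ Δ'} : WeakA a Δ Δ' → Sat φ Δ' → Sat (.dia a φ) Δ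
  | conj {n φs Δ} : (∀ i, Sat (φs i) Δ) → Sat (.conj n φs) Δ
  | prob {n} {p : Fin n → ℝ} {φs Δ} (Δs : Fin n → Wt (SCSP A)) :
      (∀ i, Sat (φs i) (Δs i)) →
      TauStar Δ (fun t => ∑ i, p i * Δs i t) →
      Sat (.prob n p φs) Δ

/-- The logical preorder `⊑^L`. -/
def LPre {A : Type} (P Q : PCSP A) : Prop :=
  ∀ φ : Form A, WFF φ → NoRef φ → Sat φ P.interp → Sat φ Q.interp

/-- The logical preorder `⊑^F`. -/
def FPre {A : Type} (P Q : PCSP A) : Prop :=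
  ∀ φ : Form A, WFF φ → Sat φ Q.interp → Sat φ P.interp

mutual
/-- `CharS s φ` : `φ` is an F-characteristic formula `φ_s` of the state `s`. -/
inductive CharS : {A : Type} → SCSP A → Form A → Prop where
  | noTau {A : Type} {s : SCSP A} (n : ℕ) (a : Fin n → A)
      (Δ : Fin n → Wt (SCSP A)) (φ : Fin n → Form A) :
      (∀ Θ, ¬ Step s none Θ) →
      (∀ i, Step s (some (a i)) (Δ i)) →
      (∀ b Θ, Step s (some b) Θ → ∃ i, a i = b ∧ Δ i = Θ) →
      (∀ i, CharD (Δ i) (φ i)) →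
      CharS s (.conj (n+1) (Fin.snoc (fun i => .dia (a i) (φ i))
        (.ref {b : A | ∀ Θ, ¬ Step s (some b) Θ})))
  | tau {A : Type} {s : SCSP A} (n m : ℕ) (a : Fin n → A)
      (Δ : Fin n → Wt (SCSP A)) (φ : Fin n → Form A)
      (Θs : Fin m → Wt (SCSP A)) (ψ : Fin m → Form A) :
      (∃ Θ, Step s none Θ) →
      (∀ i, Step s (some (a i)) (Δ i)) →
      (∀ b Θ, Step s (some b) Θ → ∃ i, a i = b ∧ Δ i = Θ) →
      (∀ j, Step s none (Θs j)) →
      (∀ Θ, Step s none Θ → ∃ j, Θs j = Θ) →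
      (∀ i, CharD (Δ i) (φ i)) →
      (∀ j, CharD (Θs j) (ψ j)) →
      CharS s (.conj (n+m) (Fin.append (fun i => .dia (a i) (φ i)) ψ))
/-- `CharD Δ φ` : `φ` is an F-characteristic formula `φ_Δ` of the distribution `Δ`. -/
inductive CharD : {A : Type} → Wt (SCSP A) → Form A → Prop where
  | mk {A : Type} {Δ : Wt (SCSP A)} (n : ℕ) (s : Fin n → SCSP A) (φ : Fin n → Form A) :
      Function.Injective s →
      (∀ i, s i ∈ dsupp Δ) →
      (∀ t ∈ dsupp Δ, ∃ i, s i = t) →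
      (∀ i, CharS (s i) (φ i)) →
      CharD Δ (.prob n (fun i => Δ (s i)) φ)
end

mutual
/-- `CharSL s ψ` : `ψ` is an L-characteristic formula `ψ_s` of the state `s`. -/
inductive CharSL : {A : Type} → SCSP A → Form A → Prop where
  | noTau {A : Type} {s : SCSP A} (n : ℕ) (a : Fin n → A)
      (Δ : Fin n → Wt (SCSP A)) (φ : Fin n → Form A) :
      (∀ Θ, ¬ Step s none Θ) →
      (∀ i, Step s (some (a i)) (Δ i)) →
      (∀ b Θ, Step s (some b) Θ → ∃ i, a i = b ∧ Δ i = Θ) →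
      (∀ i, CharDL (Δ i) (φ i)) →
      CharSL s (.conj n (fun i => .dia (a i) (φ i)))
  | tau {A : Type} {s : SCSP A} (n m : ℕ) (a : Fin n → A)
      (Δ : Fin n → Wt (SCSP A)) (φ : Fin n → Form A)
      (Θs : Fin m → Wt (SCSP A)) (ψ : Fin m → Form A) :
      (∃ Θ, Step s none Θ) →
      (∀ i, Step s (some (a i)) (Δ i)) →
      (∀ b Θ, Step s (some b) Θ → ∃ i, a i = b ∧ Δ i = Θ) →
      (∀ j, Step s none (Θs j)) →
      (∀ Θ, Step s none Θ → ∃ j, Θs j = Θ) →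
      (∀ i, CharDL (Δ i) (φ i)) →
      (∀ j, CharDL (Θs j) (ψ j)) →
      CharSL s (.conj (n+m) (Fin.append (fun i => .dia (a i) (φ i)) ψ))
/-- `CharDL Δ ψ` : `ψ` is an L-characteristic formula `ψ_Δ` of the distribution `Δ`. -/
inductive CharDL : {A : Type} → Wt (SCSP A) → Form A → Prop where
  | mk {A : Type} {Δ : Wt (SCSP A)} (n : ℕ) (s : Fin n → SCSP A) (φ : Fin n → Form A) :
      Function.Injective s →
      (∀ i, s i ∈ dsupp Δ) →
      (∀ t ∈ dsupp Δ, ∃ i, s i = t) →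
      (∀ i, CharSL (s i) (φ i)) →
      CharDL Δ (.prob n (fun i => Δ (s i)) φ)
end
/-! ### The sub-language nCSP and (in)equational theories -/

mutual
/-- Membership in `nCSP`: no parallel composition. -/
inductive PNoPar : {A : Type} → PCSP A → Prop where
  | st {A : Type} {s : SCSP A} : SNoPar s → PNoPar (.st s)
  | pch {A : Type} {p : ℝ} {P Q : PCSP A} : PNoPar P → PNoPar Q → PNoPar (.pch p P Q)
inductive SNoPar : {A : Type} → SCSP A → Prop where
  | nil {A : Type} : SNoPar (SCSP.nil (A := A))
  | pre {A : Type} {a : A} {P} : PNoPar P → SNoPar (.pre a P)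
  | ich {A : Type} {P Q : PCSP A} : PNoPar P → PNoPar Q → SNoPar (.ich P Q)
  | ech {A : Type} {s t : SCSP A} : SNoPar s → SNoPar t → SNoPar (.ech s t)
end

/-- Initial actions of a state-based term (`none` denotes τ). -/
def initsS {A : Type} : SCSP A → Set (Option A)
  | .nil => ∅
  | .pre a _ => {some a}
  | .ich _ _ => {none}
  | .ech s t => initsS s ∪ initsS t
  | .par _ s t => initsS s ∪ initsS t

/-- Initial actions of a process term. -/
def initsP {A : Type} : PCSP A → Set (Option A)
  | .st s => initsS s
  | .pch _ P Q => initsP P ∪ initsP Q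

/-- Derivability in the equational theory `=_E` of Figure 3. -/
inductive EqE {A : Type} : PCSP A → PCSP A → Prop where
  | refl (P) : EqE P P
  | symm {P Q} : EqE P Q → EqE Q P
  | trans {P Q R} : EqE P Q → EqE Q R → EqE P R
  | congPre (a : A) {P Q} : EqE P Q → EqE (.st (.pre a P)) (.st (.pre a Q))
  | congIch {P₁ P₂ Q₁ Q₂} : EqE P₁ Q₁ → EqE P₂ Q₂ →
      EqE (.st (.ich P₁ P₂)) (.st (.ich Q₁ Q₂))
  | congEch {P₁ P₂ Q₁ Q₂} : EqE P₁ Q₁ → EqE P₂ Q₂ →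
      EqE (echC P₁ P₂) (echC Q₁ Q₂)
  | congPch (p : ℝ) {P₁ P₂ Q₁ Q₂} : EqE P₁ Q₁ → EqE P₂ Q₂ →
      EqE (.pch p P₁ P₂) (.pch p Q₁ Q₂)
  | P1 (p : ℝ) (h₀ : 0 < p) (h₁ : p < 1) (P) : EqE (.pch p P P) P
  | P2 (p : ℝ) (h₀ : 0 < p) (h₁ : p < 1) (P Q) :
      EqE (.pch p P Q) (.pch (1-p) Q P)
  | P3 (p q : ℝ) (hp₀ : 0 < p) (hp₁ : p < 1) (hq₀ : 0 < q) (hq₁ : q < 1) (P Q R) :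
      EqE (.pch q (.pch p P Q) R)
          (.pch (p*q) P (.pch ((1-p)*q/(1-p*q)) Q R))
  | I1 (P) : EqE (.st (.ich P P)) P
  | I2 (P Q) : EqE (.st (.ich P Q)) (.st (.ich Q P))
  | I3 (P Q R) : EqE (.st (.ich (.st (.ich P Q)) R)) (.st (.ich P (.st (.ich Q R))))
  | E1 (P) : EqE (echC P (.st .nil)) P
  | E2 (P Q) : EqE (echC P Q) (echC Q P)
  | E3 (P Q R) : EqE (echC (echC P Q) R) (echC P (echC Q R))
  | EI (a : A) (P Q) :
      EqE (echC (.st (.pre a P)) (.st (.pre a Q)))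
          (.st (.ich (.st (.pre a P)) (.st (.pre a Q))))
  | D1 (p : ℝ) (h₀ : 0 < p) (h₁ : p < 1) (P Q R) :
      EqE (echC P (.pch p Q R)) (.pch p (echC P Q) (echC P R))
  | D2 (a : A) (P Q R) :
      EqE (echC (.st (.pre a P)) (.st (.ich Q R)))
          (.st (.ich (echC (.st (.pre a P)) Q) (echC (.st (.pre a P)) R)))
  | D3 (P₁ P₂ Q₁ Q₂) :
      EqE (echC (.st (.ich P₁ P₂)) (.st (.ich Q₁ Q₂)))
          (.st (.ich
            (.st (.ich (echC P₁ (.st (.ich Q₁ Q₂))) (echC P₂ (.st (.ich Q₁ Q₂)))))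
            (.st (.ich (echC (.st (.ich P₁ P₂)) Q₁) (echC (.st (.ich P₁ P₂)) Q₂)))))

/-- Derivability from the probabilistic axioms P1–P3 and D1 only (`=_prob`). -/
inductive EqProb {A : Type} : PCSP A → PCSP A → Prop where
  | refl (P) : EqProb P P
  | symm {P Q} : EqProb P Q → EqProb Q P
  | trans {P Q R} : EqProb P Q → EqProb Q R → EqProb P R
  | congPre (a : A) {P Q} : EqProb P Q → EqProb (.st (.pre a P)) (.st (.pre a Q))
  | congIch {P₁ P₂ Q₁ Q₂} : EqProb P₁ Q₁ → EqProb P₂ Q₂ →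
      EqProb (.st (.ich P₁ P₂)) (.st (.ich Q₁ Q₂))
  | congEch {P₁ P₂ Q₁ Q₂} : EqProb P₁ Q₁ → EqProb P₂ Q₂ →
      EqProb (echC P₁ P₂) (echC Q₁ Q₂)
  | congPch (p : ℝ) {P₁ P₂ Q₁ Q₂} : EqProb P₁ Q₁ → EqProb P₂ Q₂ →
      EqProb (.pch p P₁ P₂) (.pch p Q₁ Q₂)
  | P1 (p : ℝ) (h₀ : 0 < p) (h₁ : p < 1) (P) : EqProb (.pch p P P) P
  | P2 (p : ℝ) (h₀ : 0 < p) (h₁ : p < 1) (P Q) :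
      EqProb (.pch p P Q) (.pch (1-p) Q P)
  | P3 (p q : ℝ) (hp₀ : 0 < p) (hp₁ : p < 1) (hq₀ : 0 < q) (hq₁ : q < 1) (P Q R) :
      EqProb (.pch q (.pch p P Q) R)
          (.pch (p*q) P (.pch ((1-p)*q/(1-p*q)) Q R))
  | D1 (p : ℝ) (h₀ : 0 < p) (h₁ : p < 1) (P Q R) :
      EqProb (echC P (.pch p Q R)) (.pch p (echC P Q) (echC P R))

mutual
/-- Normal forms. -/
inductive IsNF : {A : Type} → PCSP A → Prop where
  | pch {A : Type} {p : ℝ} {N₁ N₂ : PCSP A} : 0 < p → p < 1 →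
      IsNF N₁ → IsNF N₂ → IsNF (.pch p N₁ N₂)
  | ich {A : Type} {N₁ N₂ : PCSP A} : IsNF N₁ → IsNF N₂ → IsNF (.st (.ich N₁ N₂))
  | ext {A : Type} {s : SCSP A} : IsExtNF s → IsNF (.st s)
/-- External-choice normal forms `◻_{i∈I} a_i.N_i`. -/
inductive IsExtNF : {A : Type} → SCSP A → Prop where
  | nil {A : Type} : IsExtNF (SCSP.nil (A := A))
  | pre {A : Type} {a : A} {N} : IsNF N → IsExtNF (.pre a N)
  | ech {A : Type} {s t : SCSP A} : IsExtNF s → IsExtNF t → IsExtNF (.ech s t)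
end

/-- Derivability in the inequational theory for may testing (`⊑_Emay`). -/
inductive LeMay {A : Type} : PCSP A → PCSP A → Prop where
  | ofEq {P Q} : EqE P Q → LeMay P Q
  | trans {P Q R} : LeMay P Q → LeMay Q R → LeMay P R
  | congPre (a : A) {P Q} : LeMay P Q → LeMay (.st (.pre a P)) (.st (.pre a Q))
  | congIch {P₁ P₂ Q₁ Q₂} : LeMay P₁ Q₁ → LeMay P₂ Q₂ →
      LeMay (.st (.ich P₁ P₂)) (.st (.ich Q₁ Q₂))
  | congEch {P₁ P₂ Q₁ Q₂} : LeMay P₁ Q₁ → LeMay P₂ Q₂ →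
      LeMay (echC P₁ P₂) (echC Q₁ Q₂)
  | congPch (p : ℝ) {P₁ P₂ Q₁ Q₂} : LeMay P₁ Q₁ → LeMay P₂ Q₂ →
      LeMay (.pch p P₁ P₂) (.pch p Q₁ Q₂)
  | may0 (a b : A) (P Q) :
      LeMay (echC (.st (.pre a P)) (.st (.pre b Q)))
            (.st (.ich (.st (.pre a P)) (.st (.pre b Q))))
  | may0' (a b : A) (P Q) :
      LeMay (.st (.ich (.st (.pre a P)) (.st (.pre b Q))))
            (echC (.st (.pre a P)) (.st (.pre b Q)))
  | may1 (P Q) : LeMay P (.st (.ich P Q))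
  | may2 (P) : LeMay (.st .nil) P
  | may3 (a : A) (p : ℝ) (h₀ : 0 < p) (h₁ : p < 1) (P Q) :
      LeMay (.st (.pre a (.pch p P Q))) (.pch p (.st (.pre a P)) (.st (.pre a Q)))

/-- Derivability in the inequational theory for must testing (`⊑_Emust`). -/
inductive LeMust {A : Type} : PCSP A → PCSP A → Prop where
  | ofEq {P Q} : EqE P Q → LeMust P Q
  | trans {P Q R} : LeMust P Q → LeMust Q R → LeMust P R
  | congPre (a : A) {P Q} : LeMust P Q → LeMust (.st (.pre a P)) (.st (.pre a Q))
  | congIch {P₁ P₂ Q₁ Q₂} : LeMust P₁ Q₁ → LeMust P₂ Q₂ →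
      LeMust (.st (.ich P₁ P₂)) (.st (.ich Q₁ Q₂))
  | congEch {P₁ P₂ Q₁ Q₂} : LeMust P₁ Q₁ → LeMust P₂ Q₂ →
      LeMust (echC P₁ P₂) (echC Q₁ Q₂)
  | congPch (p : ℝ) {P₁ P₂ Q₁ Q₂} : LeMust P₁ Q₁ → LeMust P₂ Q₂ →
      LeMust (.pch p P₁ P₂) (.pch p Q₁ Q₂)
  | must1 (P Q) : LeMust (.st (.ich P Q)) Q
  | must2 (n : ℕ) (a : Fin (n+1) → A) (m : Fin (n+1) → ℕ)
      (p : (i : Fin (n+1)) → Fin (m i + 1) → ℝ)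
      (Q : (i : Fin (n+1)) → Fin (m i + 1) → PCSP A)
      (P : (i : Fin (n+1)) → Fin (m i + 1) → PCSP A)
      (R : PCSP A) :
      (∀ i j, 0 ≤ p i j) → (∀ i, ∑ j, p i j = 1) →
      initsP R ⊆ {α | ∃ i, α = some (a i)} →
      LeMust
        (.st (.ich R (ichFin n (fun i =>
          pchFin (m i) (p i) (fun j => echC (.st (.pre (a i) (Q i j))) (P i j))))))
        (.st (echFin n (fun i => .pre (a i) (pchFin (m i) (p i) (Q i)))))


/-! ### Auxiliary development for Theorem 6.9 -/

section Aux

variable {A : Type}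

mutual
/-- Size of a process term. -/
def sizeP : PCSP A → ℕ
  | .st s => sizeS s + 1
  | .pch _ P Q => sizeP P + sizeP Q + 1
/-- Size of a state term. -/
def sizeS : SCSP A → ℕ
  | .nil => 1
  | .pre _ P => sizeP P + 1
  | .ich P Q => sizeP P + sizeP Q + 1
  | .ech s t => sizeS s + sizeS t + 1
  | .par _ s t => sizeS s + sizeS t + 1
end

lemma sizeS_pos (s : SCSP A) : 1 ≤ sizeS s := by
  cases s <;> simp [sizeS] <;> omega

lemma sizeP_pos (P : PCSP A) : 1 ≤ sizeP P := by
  cases P <;> simp [sizeP] <;> omega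

/-! #### finsum / distribution helpers -/

lemma dirac_self {X : Type} (x : X) : dirac x x = 1 := by simp [dirac]

lemma dsupp_dirac {X : Type} (x : X) : dsupp (dirac x) = {x} := by
  ext y; simp [dsupp, dirac, Function.support]

lemma isDist_dirac {X : Type} (x : X) : IsDist (dirac x) := by
  refine ⟨fun y => ?_, ?_, ?_⟩
  · by_cases h : y = x <;> simp [dirac, h]
  · rw [dsupp_dirac]; exact Set.finite_singleton x
  · rw [finsum_eq_single _ x (fun y hy => by simp [dirac, hy])]
    simp [dirac]

lemma mem_dsupp {X : Type} {Δ : Wt X} {t : X} : t ∈ dsupp Δ ↔ Δ t ≠ 0 := Iff.rfl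

lemma isDist_pch {X : Type} {p : ℝ} {Δ₁ Δ₂ : Wt X} (hp0 : 0 ≤ p) (hp1 : p ≤ 1)
    (h1 : IsDist Δ₁) (h2 : IsDist Δ₂) :
    IsDist (fun t => p * Δ₁ t + (1 - p) * Δ₂ t) := by
  obtain ⟨h1n, h1f, h1s⟩ := h1
  obtain ⟨h2n, h2f, h2s⟩ := h2
  have hs1 : (Function.support fun t => p * Δ₁ t).Finite :=
    h1f.subset (fun t ht => by
      simp only [Function.mem_support] at ht
      simp only [dsupp, Function.mem_support]
      intro h; exact ht (by rw [h, mul_zero]))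
  have hs2 : (Function.support fun t => (1 - p) * Δ₂ t).Finite :=
    h2f.subset (fun t ht => by
      simp only [Function.mem_support] at ht
      simp only [dsupp, Function.mem_support]
      intro h; exact ht (by rw [h, mul_zero]))
  refine ⟨fun t => add_nonneg (mul_nonneg hp0 (h1n t))
    (mul_nonneg (by linarith) (h2n t)), ?_, ?_⟩
  · refine Set.Finite.subset (hs1.union hs2) ?_
    intro t ht
    simp only [dsupp, Function.mem_support] at ht
    by_contra hc
    simp only [Set.mem_union, Function.mem_support, not_or, not_not] at hc
    rw [hc.1, hc.2, add_zero] at ht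
    exact ht rfl
  · rw [finsum_add_distrib hs1 hs2, ← mul_finsum _ _, ← mul_finsum _ _, h1s, h2s]
    ring

lemma dmap_apply {X Y : Type} (g : X → Y) {Δ : Wt X} (hf : (dsupp Δ).Finite) (y : Y) :
    dmap g Δ y = ∑ x ∈ hf.toFinset.filter (fun x => g x = y), Δ x := by
  unfold dmap
  refine finsum_mem_eq_sum_of_inter_support_eq _ ?_
  ext x
  simp only [Set.mem_inter_iff, Set.mem_setOf_eq, Function.mem_support, Finset.coe_filter,
    Set.Finite.mem_toFinset]
  constructor
  · rintro ⟨h1, h2⟩; exact ⟨⟨h2, h1⟩, h2⟩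
  · rintro ⟨⟨_, h1⟩, h2⟩; exact ⟨h1, h2⟩

lemma dmap_supp {X Y : Type} {g : X → Y} {Δ : Wt X} (hf : (dsupp Δ).Finite) {y : Y}
    (hy : dmap g Δ y ≠ 0) : ∃ x, Δ x ≠ 0 ∧ g x = y := by
  rw [dmap_apply g hf] at hy
  obtain ⟨x, hx, hx0⟩ := Finset.exists_ne_zero_of_sum_ne_zero hy
  simp only [Finset.mem_filter, Set.Finite.mem_toFinset] at hx
  exact ⟨x, hx0, hx.2⟩

lemma isDist_dmap {X Y : Type} (g : X → Y) {Δ : Wt X} (h : IsDist Δ) :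
    IsDist (dmap g Δ) := by
  obtain ⟨hn, hf, hs⟩ := h
  refine ⟨fun y => ?_, ?_, ?_⟩
  · rw [dmap_apply g hf]; exact Finset.sum_nonneg (fun x _ => hn x)
  · refine Set.Finite.subset (hf.image g) ?_
    intro y hy
    obtain ⟨x, hx, hgx⟩ := dmap_supp hf hy
    exact ⟨x, hx, hgx⟩
  · have hsub : Function.support (dmap g Δ) ⊆ ↑(hf.toFinset.image g) := by
      intro y hy
      obtain ⟨x, hx, hgx⟩ := dmap_supp hf hy
      simp only [Finset.coe_image, Set.mem_image, Set.Finite.coe_toFinset]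
      exact ⟨x, hx, hgx⟩
    rw [finsum_eq_finset_sum_of_support_subset _ hsub]
    calc ∑ y ∈ hf.toFinset.image g, dmap g Δ y
        = ∑ y ∈ hf.toFinset.image g, ∑ x ∈ hf.toFinset.filter (fun x => g x = y), Δ x := by
          refine Finset.sum_congr rfl (fun y _ => dmap_apply g hf y)
      _ = ∑ x ∈ hf.toFinset, Δ x :=
          Finset.sum_fiberwise_of_maps_to (fun x hx => Finset.mem_image_of_mem g hx) _
      _ = 1 := by rw [← hs]; exact (finsum_eq_sum Δ hf).symm

lemma isDist_prod {X Y : Type} {Δ₁ : Wt X} {Δ₂ : Wt Y}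
    (h1 : IsDist Δ₁) (h2 : IsDist Δ₂) :
    IsDist (fun q : X × Y => Δ₁ q.1 * Δ₂ q.2) := by
  obtain ⟨h1n, h1f, h1s⟩ := h1
  obtain ⟨h2n, h2f, h2s⟩ := h2
  refine ⟨fun q => mul_nonneg (h1n _) (h2n _), ?_, ?_⟩
  · refine Set.Finite.subset (h1f.prod h2f) ?_
    intro q hq
    simp only [dsupp, Function.mem_support] at hq
    exact ⟨fun h => hq (by simp [h]), fun h => hq (by simp [h])⟩
  · have hsub : Function.support (fun q : X × Y => Δ₁ q.1 * Δ₂ q.2)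
        ⊆ ↑(h1f.toFinset ×ˢ h2f.toFinset) := by
      intro q hq
      simp only [Function.mem_support] at hq
      simp only [Finset.coe_product, Set.mem_prod, Set.Finite.coe_toFinset]
      exact ⟨fun h => hq (by simp [h]), fun h => hq (by simp [h])⟩
    rw [finsum_eq_finset_sum_of_support_subset _ hsub, Finset.sum_product]
    have : ∀ x, ∑ y ∈ h2f.toFinset, Δ₁ x * Δ₂ y = Δ₁ x := by
      intro x
      rw [← Finset.mul_sum, ← finsum_eq_sum_of_support_subset Δ₂ (s := h2f.toFinset) (fun y hy => h2f.mem_toFinset.2 hy), h2s, mul_one]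
    rw [Finset.sum_congr rfl (fun x _ => this x), ← finsum_eq_sum_of_support_subset Δ₁ (s := h1f.toFinset) (fun y hy => h1f.mem_toFinset.2 hy), h1s]

end Aux


section Aux2

variable {A : Type}

lemma finsum_mem_ne_zero {X : Type} {S : Set X} {f : X → ℝ}
    (h : ∑ᶠ x ∈ S, f x ≠ 0) : ∃ x ∈ S, f x ≠ 0 := by
  by_contra hc
  push_neg at hc
  exact h (finsum_mem_of_eqOn_zero hc)

lemma dmap_ne_zero {X Y : Type} {g : X → Y} {Δ : Wt X} {y : Y}
    (h : dmap g Δ y ≠ 0) : ∃ x, g x = y ∧ Δ x ≠ 0 := by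
  obtain ⟨x, hx, hfx⟩ := finsum_mem_ne_zero h
  exact ⟨x, hx, hfx⟩

lemma interp_supp_size : ∀ (N : ℕ) (P : PCSP A) (t : SCSP A), sizeP P ≤ N →
    P.interp t ≠ 0 → sizeS t < sizeP P := by
  intro N
  induction N with
  | zero => intro P t h; have := sizeP_pos P; omega
  | succ N ih =>
    intro P t h ht
    cases P with
    | st s =>
      simp only [PCSP.interp, dirac] at ht
      by_cases hts : t = s
      · subst hts; simp [sizeP]
      · simp [hts] at ht
    | pch p P Q =>
      simp only [PCSP.interp] at ht
      have hor : P.interp t ≠ 0 ∨ Q.interp t ≠ 0 := by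
        by_contra hc
        push_neg at hc
        rw [hc.1, hc.2] at ht
        simp at ht
      simp only [sizeP] at h ⊢
      rcases hor with h' | h'
      · have := ih P t (by omega) h'; omega
      · have := ih Q t (by omega) h'; omega

lemma interp_supp_size' (P : PCSP A) (t : SCSP A) (ht : P.interp t ≠ 0) :
    sizeS t < sizeP P := interp_supp_size (sizeP P) P t le_rfl ht

lemma step_supp_size {s : SCSP A} {α : Option A} {Δ : Wt (SCSP A)}
    (h : Step s α Δ) : ∀ t, Δ t ≠ 0 → sizeS t < sizeS s := by
  induction h with
  | pre a P =>
    intro t ht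
    have := interp_supp_size' P t ht
    simp only [sizeS]; omega
  | ichL P Q =>
    intro t ht
    have := interp_supp_size' P t ht
    simp only [sizeS]; omega
  | ichR P Q =>
    intro t ht
    have := interp_supp_size' Q t ht
    simp only [sizeS]; omega
  | echL h ih =>
    intro t ht
    have := ih t ht
    simp only [sizeS]; omega
  | echR h ih =>
    intro t ht
    have := ih t ht
    simp only [sizeS]; omega
  | echTL h ih =>
    intro t ht
    obtain ⟨x, hx, hΔ⟩ := dmap_ne_zero ht
    have := ih x hΔ
    rw [← hx]
    simp only [sizeS]; omega
  | echTR h ih =>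
    intro t ht
    obtain ⟨x, hx, hΔ⟩ := dmap_ne_zero ht
    have := ih x hΔ
    rw [← hx]
    simp only [sizeS]; omega
  | parL h hni ih =>
    intro t ht
    obtain ⟨x, hx, hΔ⟩ := dmap_ne_zero ht
    have := ih x hΔ
    rw [← hx]
    simp only [sizeS]; omega
  | parR h hni ih =>
    intro t ht
    obtain ⟨x, hx, hΔ⟩ := dmap_ne_zero ht
    have := ih x hΔ
    rw [← hx]
    simp only [sizeS]; omega
  | parS hmem h1 h2 ih1 ih2 =>
    intro t ht
    obtain ⟨q, hq, hΔ⟩ := dmap_ne_zero ht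
    have hq1 : _ ≠ (0:ℝ) := left_ne_zero_of_mul hΔ
    have hq2 : _ ≠ (0:ℝ) := right_ne_zero_of_mul hΔ
    have := ih1 q.1 hq1
    have := ih2 q.2 hq2
    rw [← hq]
    simp only [sizeS]; omega

lemma interp_isDist : ∀ (N : ℕ) (P : PCSP A), sizeP P ≤ N → PWF P →
    IsDist P.interp ∧ ∀ t, P.interp t ≠ 0 → SWF t := by
  intro N
  induction N with
  | zero => intro P h; have := sizeP_pos P; omega
  | succ N ih =>
    intro P h hwf
    cases P with
    | st s =>
      cases hwf with
      | st hs =>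
        refine ⟨isDist_dirac s, fun t ht => ?_⟩
        simp only [PCSP.interp, dirac] at ht
        by_cases hts : t = s
        · subst hts; exact hs
        · simp [hts] at ht
    | pch p P Q =>
      cases hwf with
      | pch h0 h1 hP hQ =>
        simp only [sizeP] at h
        obtain ⟨hdP, hsP⟩ := ih P (by omega) hP
        obtain ⟨hdQ, hsQ⟩ := ih Q (by omega) hQ
        refine ⟨isDist_pch h0.le h1.le hdP hdQ, fun t ht => ?_⟩
        simp only [PCSP.interp] at ht
        have hor : P.interp t ≠ 0 ∨ Q.interp t ≠ 0 := by
          by_contra hc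
          push_neg at hc
          rw [hc.1, hc.2] at ht
          simp at ht
        rcases hor with h' | h'
        · exact hsP t h'
        · exact hsQ t h'

lemma interp_isDist' {P : PCSP A} (hwf : PWF P) :
    IsDist P.interp ∧ ∀ t, P.interp t ≠ 0 → SWF t :=
  interp_isDist (sizeP P) P le_rfl hwf

lemma step_preserve {s : SCSP A} {α : Option A} {Δ : Wt (SCSP A)}
    (h : Step s α Δ) (hwf : SWF s) :
    IsDist Δ ∧ ∀ t, Δ t ≠ 0 → SWF t := by
  induction h with
  | pre a P =>
    cases hwf with
    | pre hP => exact interp_isDist' hP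
  | ichL P Q =>
    cases hwf with
    | ich hP hQ => exact interp_isDist' hP
  | ichR P Q =>
    cases hwf with
    | ich hP hQ => exact interp_isDist' hQ
  | echL h ih =>
    cases hwf with
    | ech h1 h2 => exact ih h1
  | echR h ih =>
    cases hwf with
    | ech h1 h2 => exact ih h2
  | echTL h ih =>
    rename_i s₁ s₂ Δ'
    cases hwf with
    | ech h1 h2 =>
      obtain ⟨hd, hs⟩ := ih h1
      refine ⟨isDist_dmap _ hd, fun t ht => ?_⟩
      obtain ⟨x, hx, hΔ⟩ := dmap_ne_zero ht
      rw [← hx]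
      exact SWF.ech (hs x hΔ) h2
  | echTR h ih =>
    cases hwf with
    | ech h1 h2 =>
      obtain ⟨hd, hs⟩ := ih h2
      refine ⟨isDist_dmap _ hd, fun t ht => ?_⟩
      obtain ⟨x, hx, hΔ⟩ := dmap_ne_zero ht
      rw [← hx]
      exact SWF.ech h1 (hs x hΔ)
  | parL h hni ih =>
    cases hwf with
    | par h1 h2 =>
      obtain ⟨hd, hs⟩ := ih h1
      refine ⟨isDist_dmap _ hd, fun t ht => ?_⟩
      obtain ⟨x, hx, hΔ⟩ := dmap_ne_zero ht
      rw [← hx]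
      exact SWF.par (hs x hΔ) h2
  | parR h hni ih =>
    cases hwf with
    | par h1 h2 =>
      obtain ⟨hd, hs⟩ := ih h2
      refine ⟨isDist_dmap _ hd, fun t ht => ?_⟩
      obtain ⟨x, hx, hΔ⟩ := dmap_ne_zero ht
      rw [← hx]
      exact SWF.par h1 (hs x hΔ)
  | parS hmem h1 h2 ih1 ih2 =>
    cases hwf with
    | par hw1 hw2 =>
      obtain ⟨hd1, hs1⟩ := ih1 hw1
      obtain ⟨hd2, hs2⟩ := ih2 hw2
      refine ⟨isDist_dmap _ (isDist_prod hd1 hd2), fun t ht => ?_⟩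
      obtain ⟨q, hq, hΔ⟩ := dmap_ne_zero ht
      rw [← hq]
      exact SWF.par (hs1 q.1 (left_ne_zero_of_mul hΔ)) (hs2 q.2 (right_ne_zero_of_mul hΔ))

end Aux2


section Aux3

variable {A : Type}

lemma steps_enum : ∀ (N : ℕ) (s : SCSP A), sizeS s ≤ N →
    ∃ (Lv : List (A × Wt (SCSP A))) (Lt : List (Wt (SCSP A))),
      (∀ a Θ, Step s (some a) Θ ↔ (a, Θ) ∈ Lv) ∧
      (∀ Θ, Step s none Θ ↔ Θ ∈ Lt) := by
  intro N
  induction N with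
  | zero => intro s h; have := sizeS_pos s; omega
  | succ N ih =>
    intro s h
    cases s with
    | nil =>
      refine ⟨[], [], fun a Θ => ⟨(fun h => by cases h), (fun h => by simp at h)⟩,
        fun Θ => ⟨(fun h => by cases h), (fun h => by simp at h)⟩⟩
    | pre a P =>
      refine ⟨[(a, P.interp)], [], fun b Θ => ⟨fun h => ?_, fun h => ?_⟩,
        fun Θ => ⟨(fun h => by cases h), (fun h => by simp at h)⟩⟩
      · cases h; simp
      · simp at h; rw [h.1, h.2]; exact Step.pre a P
    | ich P Q =>
      refine ⟨[], [P.interp, Q.interp], fun b Θ => ⟨(fun h => by cases h), (fun h => by simp at h)⟩,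
        fun Θ => ⟨fun h => ?_, fun h => ?_⟩⟩
      · cases h <;> simp
      · simp at h
        rcases h with h | h <;> rw [h]
        · exact Step.ichL P Q
        · exact Step.ichR P Q
    | ech s₁ s₂ =>
      simp only [sizeS] at h
      obtain ⟨Lv₁, Lt₁, hv₁, ht₁⟩ := ih s₁ (by omega)
      obtain ⟨Lv₂, Lt₂, hv₂, ht₂⟩ := ih s₂ (by omega)
      refine ⟨Lv₁ ++ Lv₂,
        Lt₁.map (fun Δ => dmap (fun t => SCSP.ech t s₂) Δ) ++
        Lt₂.map (fun Δ => dmap (fun t => SCSP.ech s₁ t) Δ),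
        fun a Θ => ⟨fun hst => ?_, fun hm => ?_⟩, fun Θ => ⟨fun hst => ?_, fun hm => ?_⟩⟩
      · cases hst with
        | echL h' => exact List.mem_append_left _ ((hv₁ a Θ).1 h')
        | echR h' => exact List.mem_append_right _ ((hv₂ a Θ).1 h')
      · rcases List.mem_append.1 hm with hm | hm
        · exact Step.echL ((hv₁ a Θ).2 hm)
        · exact Step.echR ((hv₂ a Θ).2 hm)
      · cases hst with
        | echTL h' =>
          exact List.mem_append_left _ (List.mem_map.2 ⟨_, (ht₁ _).1 h', rfl⟩)
        | echTR h' =>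
          exact List.mem_append_right _ (List.mem_map.2 ⟨_, (ht₂ _).1 h', rfl⟩)
      · rcases List.mem_append.1 hm with hm | hm
        · obtain ⟨Δ, hΔ, rfl⟩ := List.mem_map.1 hm
          exact Step.echTL ((ht₁ Δ).2 hΔ)
        · obtain ⟨Δ, hΔ, rfl⟩ := List.mem_map.1 hm
          exact Step.echTR ((ht₂ Δ).2 hΔ)
    | par B s₁ s₂ =>
      simp only [sizeS] at h
      obtain ⟨Lv₁, Lt₁, hv₁, ht₁⟩ := ih s₁ (by omega)
      obtain ⟨Lv₂, Lt₂, hv₂, ht₂⟩ := ih s₂ (by omega)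
      refine ⟨(Lv₁.filterMap fun e =>
            if e.1 ∈ B then none else some (e.1, dmap (fun t => SCSP.par B t s₂) e.2)) ++
          (Lv₂.filterMap fun e =>
            if e.1 ∈ B then none else some (e.1, dmap (fun t => SCSP.par B s₁ t) e.2)),
        Lt₁.map (fun Δ => dmap (fun t => SCSP.par B t s₂) Δ) ++
        Lt₂.map (fun Δ => dmap (fun t => SCSP.par B s₁ t) Δ) ++
        (Lv₁.flatMap fun e₁ => Lv₂.filterMap fun e₂ =>
          if e₁.1 = e₂.1 ∧ e₁.1 ∈ B then
            some (dmap (fun q : SCSP A × SCSP A => SCSP.par B q.1 q.2)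
              (fun q => e₁.2 q.1 * e₂.2 q.2))
          else none),
        fun a Θ => ⟨fun hst => ?_, fun hm => ?_⟩, fun Θ => ⟨fun hst => ?_, fun hm => ?_⟩⟩
      · cases hst with
        | parL h' hni =>
          refine List.mem_append_left _ (List.mem_filterMap.2 ⟨_, (hv₁ a _).1 h', ?_⟩)
          rw [if_neg (hni a rfl)]
        | parR h' hni =>
          refine List.mem_append_right _ (List.mem_filterMap.2 ⟨_, (hv₂ a _).1 h', ?_⟩)
          rw [if_neg (hni a rfl)]
      · rcases List.mem_append.1 hm with hm | hm
        · obtain ⟨e, he, heq⟩ := List.mem_filterMap.1 hm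
          by_cases hB : e.1 ∈ B
          · rw [if_pos hB] at heq; exact absurd heq (by simp)
          · rw [if_neg hB] at heq
            obtain ⟨rfl, rfl⟩ : e.1 = a ∧ dmap (fun t => SCSP.par B t s₂) e.2 = Θ := by
              injection heq with h'; exact ⟨congrArg Prod.fst h', congrArg Prod.snd h'⟩
            exact Step.parL ((hv₁ _ _).2 he) (fun b hb => by injection hb with hb; rw [← hb]; exact hB)
        · obtain ⟨e, he, heq⟩ := List.mem_filterMap.1 hm
          by_cases hB : e.1 ∈ B
          · rw [if_pos hB] at heq; exact absurd heq (by simp)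
          · rw [if_neg hB] at heq
            obtain ⟨rfl, rfl⟩ : e.1 = a ∧ dmap (fun t => SCSP.par B s₁ t) e.2 = Θ := by
              injection heq with h'; exact ⟨congrArg Prod.fst h', congrArg Prod.snd h'⟩
            exact Step.parR ((hv₂ _ _).2 he) (fun b hb => by injection hb with hb; rw [← hb]; exact hB)
      · cases hst with
        | parL h' hni =>
          exact List.mem_append_left _ (List.mem_append_left _
            (List.mem_map.2 ⟨_, (ht₁ _).1 h', rfl⟩))
        | parR h' hni =>
          exact List.mem_append_left _ (List.mem_append_right _
            (List.mem_map.2 ⟨_, (ht₂ _).1 h', rfl⟩))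
        | parS hB h1 h2 =>
          refine List.mem_append_right _ (List.mem_flatMap.2
            ⟨_, (hv₁ _ _).1 h1, List.mem_filterMap.2 ⟨_, (hv₂ _ _).1 h2, ?_⟩⟩)
          rw [if_pos ⟨rfl, hB⟩]
      · rcases List.mem_append.1 hm with hm | hm
        · rcases List.mem_append.1 hm with hm | hm
          · obtain ⟨Δ, hΔ, rfl⟩ := List.mem_map.1 hm
            exact Step.parL ((ht₁ Δ).2 hΔ) (fun b hb => by simp at hb)
          · obtain ⟨Δ, hΔ, rfl⟩ := List.mem_map.1 hm
            exact Step.parR ((ht₂ Δ).2 hΔ) (fun b hb => by simp at hb)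
        · obtain ⟨e₁, he₁, hm₂⟩ := List.mem_flatMap.1 hm
          obtain ⟨e₂, he₂, heq⟩ := List.mem_filterMap.1 hm₂
          by_cases hc : e₁.1 = e₂.1 ∧ e₁.1 ∈ B
          · rw [if_pos hc] at heq
            injection heq with heq
            rw [← heq]
            exact Step.parS hc.2 ((hv₁ _ _).2 he₁) ((hv₂ _ _).2 (by rw [hc.1]; exact he₂))
          · rw [if_neg hc] at heq; exact absurd heq (by simp)

end Aux3


section Aux4

variable {A : Type}

lemma lift_single {R : SCSP A → Wt (SCSP A) → Prop} {s : SCSP A} {Φ : Wt (SCSP A)}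
    (h : R s Φ) : Lift R (dirac s) Φ := by
  refine ⟨1, fun _ => 1, fun _ => s, fun _ => Φ, fun _ => zero_le_one, by simp, ?_, fun _ => h, ?_⟩
  · funext t; simp
  · funext t; simp

lemma lift_mono {R R' : SCSP A → Wt (SCSP A) → Prop} (h : ∀ s Θ, R s Θ → R' s Θ)
    {Δ Θ : Wt (SCSP A)} (hl : Lift R Δ Θ) : Lift R' Δ Θ := by
  obtain ⟨n, p, sf, Φ, h1, h2, h3, h4, h5⟩ := hl
  exact ⟨n, p, sf, Φ, h1, h2, h3, fun i => h (sf i) _ (h4 i), h5⟩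

lemma tauStar_single {s : SCSP A} {Δ : Wt (SCSP A)} (h : Step s none Δ) :
    TauStar (dirac s) Δ :=
  Relation.ReflTransGen.single (lift_single (Or.inl h))

lemma stepD_single {s : SCSP A} {a : A} {Δ : Wt (SCSP A)} (h : Step s (some a) Δ) :
    StepD (some a) (dirac s) Δ := lift_single h

lemma weakA_single {s : SCSP A} {a : A} {Δ : Wt (SCSP A)} (h : Step s (some a) Δ) :
    WeakA a (dirac s) Δ :=
  ⟨dirac s, Δ, Relation.ReflTransGen.refl, stepD_single h, Relation.ReflTransGen.refl⟩

lemma weakA_tau {a : A} {Θ Θ₂ Θ' : Wt (SCSP A)} (h : WeakA a Θ Θ₂) (h' : TauStar Θ₂ Θ') :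
    WeakA a Θ Θ' := by
  obtain ⟨Δ₁, Δ₂, h1, h2, h3⟩ := h
  exact ⟨Δ₁, Δ₂, h1, h2, Relation.ReflTransGen.trans h3 h'⟩

variable {n : ℕ} {sf : Fin n → SCSP A} {Δ : Wt (SCSP A)}

lemma dist_eq_sum_dirac (hinj : Function.Injective sf) (hcov : ∀ t ∈ dsupp Δ, ∃ i, sf i = t) :
    Δ = fun t => ∑ i, Δ (sf i) * dirac (sf i) t := by
  funext t
  by_cases ht : Δ t = 0
  · rw [ht]
    refine (Finset.sum_eq_zero fun i _ => ?_).symm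
    by_cases hti : t = sf i
    · rw [← hti, ht, zero_mul]
    · simp [dirac, hti]
  · obtain ⟨i₀, hi₀⟩ := hcov t ht
    have heq : ∑ i, Δ (sf i) * dirac (sf i) t = Δ (sf i₀) * dirac (sf i₀) t := by
      refine Finset.sum_eq_single i₀ (fun j _ hj => ?_) (fun h => absurd (Finset.mem_univ i₀) h)
      have : t ≠ sf j := fun h => hj (hinj (by rw [hi₀, ← h]))
      simp [dirac, this]
    rw [heq, hi₀]
    simp [dirac]

lemma sum_supp_eq_one (hd : IsDist Δ) (hinj : Function.Injective sf)
    (hmem : ∀ i, sf i ∈ dsupp Δ) (hcov : ∀ t ∈ dsupp Δ, ∃ i, sf i = t) :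
    ∑ i, Δ (sf i) = 1 := by
  obtain ⟨hn, hf, hs⟩ := hd
  have himg : Finset.univ.image sf = hf.toFinset := by
    ext x
    simp only [Finset.mem_image, Finset.mem_univ, true_and, Set.Finite.mem_toFinset]
    exact ⟨fun ⟨i, hi⟩ => hi ▸ hmem i, fun hx => hcov x hx⟩
  calc ∑ i, Δ (sf i) = ∑ x ∈ Finset.univ.image sf, Δ x :=
        (Finset.sum_image (fun i _ j _ h => hinj h)).symm
    _ = ∑ x ∈ hf.toFinset, Δ x := by rw [himg]
    _ = 1 := by rw [← finsum_eq_sum_of_support_subset Δ (s := hf.toFinset) (fun y hy => hf.mem_toFinset.2 hy)]; exact hs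

lemma key_core {φs : Fin n → Form A} {Θ : Wt (SCSP A)}
    (R : SCSP A → Wt (SCSP A) → Prop)
    (hinj : Function.Injective sf) (hmem : ∀ i, sf i ∈ dsupp Δ)
    (hcov : ∀ t ∈ dsupp Δ, ∃ i, sf i = t) (hd : IsDist Δ)
    (hsat : Sat (.prob n (fun i => Δ (sf i)) φs) Θ)
    (hR : ∀ i Φ, Sat (φs i) Φ → R (sf i) Φ) :
    ∃ Θ', TauStar Θ Θ' ∧ Lift R Δ Θ' := by
  cases hsat with
  | prob Δs hsats htau =>
    refine ⟨_, htau, n, fun i => Δ (sf i), sf, Δs, fun i => hd.1 _,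
      sum_supp_eq_one hd hinj hmem hcov, dist_eq_sum_dirac hinj hcov,
      fun i => hR i _ (hsats i), rfl⟩

lemma sat_prob_self {φs : Fin n → Form A} {Δ₀ : Wt (SCSP A)}
    (hinj : Function.Injective sf) (hcov : ∀ t ∈ dsupp Δ, ∃ i, sf i = t)
    (hsats : ∀ i, Sat (φs i) (dirac (sf i)))
    (htau : TauStar Δ₀ Δ) :
    Sat (.prob n (fun i => Δ (sf i)) φs) Δ₀ := by
  refine Sat.prob (fun i => dirac (sf i)) hsats ?_
  show TauStar Δ₀ (fun t => ∑ i, Δ (sf i) * dirac (sf i) t)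
  rw [← dist_eq_sum_dirac hinj hcov]
  exact htau

end Aux4


section Aux5

variable {A : Type}

lemma supp_enum {Δ : Wt (SCSP A)} (hf : (dsupp Δ).Finite) :
    ∃ (n : ℕ) (sf : Fin n → SCSP A), Function.Injective sf ∧
      (∀ i, sf i ∈ dsupp Δ) ∧ (∀ t ∈ dsupp Δ, ∃ i, sf i = t) := by
  refine ⟨hf.toFinset.card, fun i => (hf.toFinset.equivFin.symm i : SCSP A),
    fun i j h => hf.toFinset.equivFin.symm.injective (Subtype.ext h), fun i => ?_, fun t ht => ?_⟩
  · exact hf.mem_toFinset.1 (hf.toFinset.equivFin.symm i).2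
  · exact ⟨hf.toFinset.equivFin ⟨t, hf.mem_toFinset.2 ht⟩, by simp⟩

lemma charDL_exists {Δ : Wt (SCSP A)} (hd : IsDist Δ)
    (hex : ∀ t, Δ t ≠ 0 → ∃ φ, CharSL t φ ∧ WFF φ ∧ NoRef φ) :
    ∃ ψ, CharDL Δ ψ ∧ WFF ψ ∧ NoRef ψ := by
  obtain ⟨n, sf, hinj, hmem, hcov⟩ := supp_enum hd.2.1
  choose φ hφ hw hr using fun i => hex (sf i) (hmem i)
  exact ⟨_, CharDL.mk n sf φ hinj hmem hcov hφ,
    WFF.prob (fun i => hd.1 _) (sum_supp_eq_one hd hinj hmem hcov) hw, NoRef.prob hr⟩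

lemma charD_exists {Δ : Wt (SCSP A)} (hd : IsDist Δ)
    (hex : ∀ t, Δ t ≠ 0 → ∃ φ, CharS t φ ∧ WFF φ) :
    ∃ ψ, CharD Δ ψ ∧ WFF ψ := by
  obtain ⟨n, sf, hinj, hmem, hcov⟩ := supp_enum hd.2.1
  choose φ hφ hw using fun i => hex (sf i) (hmem i)
  exact ⟨_, CharD.mk n sf φ hinj hmem hcov hφ,
    WFF.prob (fun i => hd.1 _) (sum_supp_eq_one hd hinj hmem hcov) hw⟩

lemma charSL_exists : ∀ (N : ℕ) (s : SCSP A), sizeS s ≤ N → SWF s →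
    ∃ φ, CharSL s φ ∧ WFF φ ∧ NoRef φ := by
  intro N
  induction N with
  | zero => intro s h; have := sizeS_pos s; omega
  | succ N ih =>
    intro s h hwf
    obtain ⟨Lv, Lt, hv, ht⟩ := steps_enum (sizeS s) s le_rfl
    set n := Lv.length with hn
    set af : Fin n → A := fun i => (Lv.get i).1 with haf
    set Δf : Fin n → Wt (SCSP A) := fun i => (Lv.get i).2 with hΔf
    have hstepv : ∀ i, Step s (some (af i)) (Δf i) := fun i => (hv _ _).2 (Lv.get_mem i)
    have hcovv : ∀ b Θ, Step s (some b) Θ → ∃ i, af i = b ∧ Δf i = Θ := by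
      intro b Θ hst
      obtain ⟨i, hi⟩ := List.mem_iff_get.1 ((hv b Θ).1 hst)
      exact ⟨i, congrArg Prod.fst hi, congrArg Prod.snd hi⟩
    have hDL : ∀ i, ∃ ψ, CharDL (Δf i) ψ ∧ WFF ψ ∧ NoRef ψ := by
      intro i
      obtain ⟨hd, hs⟩ := step_preserve (hstepv i) hwf
      refine charDL_exists hd (fun t htt => ih t ?_ (hs t htt))
      have := step_supp_size (hstepv i) t htt
      omega
    choose ψv hψv hwv hrv using hDL
    by_cases hLt : Lt = []
    · have hnone : ∀ Θ, ¬ Step s none Θ := by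
        intro Θ hΘ
        have := (ht Θ).1 hΘ
        rw [hLt] at this
        simp at this
      exact ⟨_, CharSL.noTau n af Δf ψv hnone hstepv hcovv hψv,
        WFF.conj (fun i => WFF.dia (hwv i)), NoRef.conj (fun i => NoRef.dia (hrv i))⟩
    · set m := Lt.length with hm
      set Θf : Fin m → Wt (SCSP A) := fun j => Lt.get j with hΘf
      have hstept : ∀ j, Step s none (Θf j) := fun j => (ht _).2 (Lt.get_mem j)
      have hcovt : ∀ Θ, Step s none Θ → ∃ j, Θf j = Θ := by
        intro Θ hst
        obtain ⟨j, hj⟩ := List.mem_iff_get.1 ((ht Θ).1 hst)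
        exact ⟨j, hj⟩
      have hsome : ∃ Θ, Step s none Θ := by
        obtain ⟨x, hx⟩ := List.exists_mem_of_ne_nil Lt hLt
        exact ⟨x, (ht x).2 hx⟩
      have hTL : ∀ j, ∃ ψ, CharDL (Θf j) ψ ∧ WFF ψ ∧ NoRef ψ := by
        intro j
        obtain ⟨hd, hs⟩ := step_preserve (hstept j) hwf
        refine charDL_exists hd (fun t htt => ih t ?_ (hs t htt))
        have := step_supp_size (hstept j) t htt
        omega
      choose ψt hψt hwt hrt using hTL
      refine ⟨_, CharSL.tau n m af Δf ψv Θf ψt hsome hstepv hcovv hstept hcovt hψv hψt,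
        WFF.conj (fun k => ?_), NoRef.conj (fun k => ?_)⟩
      · refine Fin.addCases (fun i => ?_) (fun j => ?_) k
        · rw [Fin.append_left]; exact WFF.dia (hwv i)
        · rw [Fin.append_right]; exact hwt j
      · refine Fin.addCases (fun i => ?_) (fun j => ?_) k
        · rw [Fin.append_left]; exact NoRef.dia (hrv i)
        · rw [Fin.append_right]; exact hrt j

lemma charS_exists : ∀ (N : ℕ) (s : SCSP A), sizeS s ≤ N → SWF s →
    ∃ φ, CharS s φ ∧ WFF φ := by
  intro N
  induction N with
  | zero => intro s h; have := sizeS_pos s; omega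
  | succ N ih =>
    intro s h hwf
    obtain ⟨Lv, Lt, hv, ht⟩ := steps_enum (sizeS s) s le_rfl
    set n := Lv.length with hn
    set af : Fin n → A := fun i => (Lv.get i).1 with haf
    set Δf : Fin n → Wt (SCSP A) := fun i => (Lv.get i).2 with hΔf
    have hstepv : ∀ i, Step s (some (af i)) (Δf i) := fun i => (hv _ _).2 (Lv.get_mem i)
    have hcovv : ∀ b Θ, Step s (some b) Θ → ∃ i, af i = b ∧ Δf i = Θ := by
      intro b Θ hst
      obtain ⟨i, hi⟩ := List.mem_iff_get.1 ((hv b Θ).1 hst)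
      exact ⟨i, congrArg Prod.fst hi, congrArg Prod.snd hi⟩
    have hDL : ∀ i, ∃ ψ, CharD (Δf i) ψ ∧ WFF ψ := by
      intro i
      obtain ⟨hd, hs⟩ := step_preserve (hstepv i) hwf
      refine charD_exists hd (fun t htt => ih t ?_ (hs t htt))
      have := step_supp_size (hstepv i) t htt
      omega
    choose ψv hψv hwv using hDL
    by_cases hLt : Lt = []
    · have hnone : ∀ Θ, ¬ Step s none Θ := by
        intro Θ hΘ
        have := (ht Θ).1 hΘ
        rw [hLt] at this
        simp at this
      refine ⟨_, CharS.noTau n af Δf ψv hnone hstepv hcovv hψv, WFF.conj (fun k => ?_)⟩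
      refine Fin.lastCases ?_ (fun i => ?_) k
      · rw [Fin.snoc_last]; exact WFF.ref
      · rw [Fin.snoc_castSucc]; exact WFF.dia (hwv i)
    · set m := Lt.length with hm
      set Θf : Fin m → Wt (SCSP A) := fun j => Lt.get j with hΘf
      have hstept : ∀ j, Step s none (Θf j) := fun j => (ht _).2 (Lt.get_mem j)
      have hcovt : ∀ Θ, Step s none Θ → ∃ j, Θf j = Θ := by
        intro Θ hst
        obtain ⟨j, hj⟩ := List.mem_iff_get.1 ((ht Θ).1 hst)
        exact ⟨j, hj⟩
      have hsome : ∃ Θ, Step s none Θ := by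
        obtain ⟨x, hx⟩ := List.exists_mem_of_ne_nil Lt hLt
        exact ⟨x, (ht x).2 hx⟩
      have hTL : ∀ j, ∃ ψ, CharD (Θf j) ψ ∧ WFF ψ := by
        intro j
        obtain ⟨hd, hs⟩ := step_preserve (hstept j) hwf
        refine charD_exists hd (fun t htt => ih t ?_ (hs t htt))
        have := step_supp_size (hstept j) t htt
        omega
      choose ψt hψt hwt using hTL
      refine ⟨_, CharS.tau n m af Δf ψv Θf ψt hsome hstepv hcovv hstept hcovt hψv hψt,
        WFF.conj (fun k => ?_)⟩
      refine Fin.addCases (fun i => ?_) (fun j => ?_) k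
      · rw [Fin.append_left]; exact WFF.dia (hwv i)
      · rw [Fin.append_right]; exact hwt j

end Aux5


section Aux6

variable {A : Type}

lemma satDL_self {Δ Δ₀ : Wt (SCSP A)} {ψ : Form A} (hc : CharDL Δ ψ)
    (hsat : ∀ t ∈ dsupp Δ, ∀ φ, CharSL t φ → Sat φ (dirac t))
    (htau : TauStar Δ₀ Δ) : Sat ψ Δ₀ := by
  cases hc with
  | mk n sf φs hinj hmem hcov hφ =>
    exact sat_prob_self hinj hcov (fun i => hsat (sf i) (hmem i) _ (hφ i)) htau

lemma satD_self {Δ Δ₀ : Wt (SCSP A)} {ψ : Form A} (hc : CharD Δ ψ)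
    (hsat : ∀ t ∈ dsupp Δ, ∀ φ, CharS t φ → Sat φ (dirac t))
    (htau : TauStar Δ₀ Δ) : Sat ψ Δ₀ := by
  cases hc with
  | mk n sf φs hinj hmem hcov hφ =>
    exact sat_prob_self hinj hcov (fun i => hsat (sf i) (hmem i) _ (hφ i)) htau

lemma satSL_self : ∀ (N : ℕ) (s : SCSP A), sizeS s ≤ N → ∀ φ, CharSL s φ → Sat φ (dirac s) := by
  intro N
  induction N with
  | zero => intro s h; have := sizeS_pos s; omega
  | succ N ih =>
    intro s h φ hc
    cases hc with
    | noTau n af Δf ψv hnone hstepv hcovv hψv =>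
      refine Sat.conj (fun i => ?_)
      refine Sat.dia (weakA_single (hstepv i)) (satDL_self (hψv i) ?_ Relation.ReflTransGen.refl)
      intro t ht φ' hφ'
      refine ih t ?_ φ' hφ'
      have := step_supp_size (hstepv i) t ht
      omega
    | tau n m af Δf ψv Θf ψt hsome hstepv hcovv hstept hcovt hψv hψt =>
      refine Sat.conj (fun k => ?_)
      refine Fin.addCases (fun i => ?_) (fun j => ?_) k
      · show Sat (Fin.append (fun i => Form.dia (af i) (ψv i)) ψt (Fin.castAdd m i)) (dirac s)
        rw [Fin.append_left]
        refine Sat.dia (weakA_single (hstepv i)) (satDL_self (hψv i) ?_ Relation.ReflTransGen.refl)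
        intro t ht φ' hφ'
        refine ih t ?_ φ' hφ'
        have := step_supp_size (hstepv i) t ht
        omega
      · show Sat (Fin.append (fun i => Form.dia (af i) (ψv i)) ψt (Fin.natAdd n j)) (dirac s)
        rw [Fin.append_right]
        refine satDL_self (hψt j) ?_ (tauStar_single (hstept j))
        intro t ht φ' hφ'
        refine ih t ?_ φ' hφ'
        have := step_supp_size (hstept j) t ht
        omega

lemma satS_self : ∀ (N : ℕ) (s : SCSP A), sizeS s ≤ N → ∀ φ, CharS s φ → Sat φ (dirac s) := by
  intro N
  induction N with
  | zero => intro s h; have := sizeS_pos s; omega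
  | succ N ih =>
    intro s h φ hc
    cases hc with
    | noTau n af Δf ψv hnone hstepv hcovv hψv =>
      refine Sat.conj (fun k => ?_)
      refine Fin.lastCases ?_ (fun i => ?_) k
      · simp only [Fin.snoc_last]
        refine Sat.ref Relation.ReflTransGen.refl ?_
        intro t htm
        have hts : t = s := by
          by_contra hne
          simp [dsupp, Function.mem_support, dirac, hne] at htm
        subst hts
        exact ⟨hnone, fun b hb Θ => hb Θ⟩
      · simp only [Fin.snoc_castSucc]
        refine Sat.dia (weakA_single (hstepv i)) (satD_self (hψv i) ?_ Relation.ReflTransGen.refl)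
        intro t ht φ' hφ'
        refine ih t ?_ φ' hφ'
        have := step_supp_size (hstepv i) t ht
        omega
    | tau n m af Δf ψv Θf ψt hsome hstepv hcovv hstept hcovt hψv hψt =>
      refine Sat.conj (fun k => ?_)
      refine Fin.addCases (fun i => ?_) (fun j => ?_) k
      · show Sat (Fin.append (fun i => Form.dia (af i) (ψv i)) ψt (Fin.castAdd m i)) (dirac s)
        rw [Fin.append_left]
        refine Sat.dia (weakA_single (hstepv i)) (satD_self (hψv i) ?_ Relation.ReflTransGen.refl)
        intro t ht φ' hφ'
        refine ih t ?_ φ' hφ'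
        have := step_supp_size (hstepv i) t ht
        omega
      · show Sat (Fin.append (fun i => Form.dia (af i) (ψv i)) ψt (Fin.natAdd n j)) (dirac s)
        rw [Fin.append_right]
        refine satD_self (hψt j) ?_ (tauStar_single (hstept j))
        intro t ht φ' hφ'
        refine ih t ?_ φ' hφ'
        have := step_supp_size (hstept j) t ht
        omega

/-- The candidate simulation built from L-characteristic formulas. -/
def RL (s : SCSP A) (Θ : Wt (SCSP A)) : Prop :=
  SWF s ∧ ∃ φ, CharSL s φ ∧ Sat φ Θ

/-- The candidate failure simulation built from F-characteristic formulas. -/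
def RF (s : SCSP A) (Θ : Wt (SCSP A)) : Prop :=
  SWF s ∧ ∃ φ, CharS s φ ∧ Sat φ Θ

lemma keyDL {Δ Θ : Wt (SCSP A)} {ψ : Form A} (hc : CharDL Δ ψ) (hd : IsDist Δ)
    (hwf : ∀ t, Δ t ≠ 0 → SWF t) (hsat : Sat ψ Θ) :
    ∃ Θ', TauStar Θ Θ' ∧ Lift RL Δ Θ' := by
  cases hc with
  | mk n sf φs hinj hmem hcov hφ =>
    exact key_core RL hinj hmem hcov hd hsat (fun i Φ hs => ⟨hwf _ (hmem i), _, hφ i, hs⟩)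

lemma keyDF {Δ Θ : Wt (SCSP A)} {ψ : Form A} (hc : CharD Δ ψ) (hd : IsDist Δ)
    (hwf : ∀ t, Δ t ≠ 0 → SWF t) (hsat : Sat ψ Θ) :
    ∃ Θ', TauStar Θ Θ' ∧ Lift RF Δ Θ' := by
  cases hc with
  | mk n sf φs hinj hmem hcov hφ =>
    exact key_core RF hinj hmem hcov hd hsat (fun i Φ hs => ⟨hwf _ (hmem i), _, hφ i, hs⟩)

lemma RL_sim : IsSimulation (RL (A := A)) := by
  intro s Θ α Δ hR hstep
  obtain ⟨hwf, φ, hχ, hsat⟩ := hR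
  obtain ⟨hd, hsupp⟩ := step_preserve hstep hwf
  cases α with
  | none =>
    cases hχ with
    | noTau n af Δf ψv hnone hstepv hcovv hψv => exact absurd hstep (hnone Δ)
    | tau n m af Δf ψv Θf ψt hsome hstepv hcovv hstept hcovt hψv hψt =>
      obtain ⟨j, hj⟩ := hcovt Δ hstep
      subst hj
      have hsatj : Sat (ψt j) Θ := by
        cases hsat with
        | conj hs =>
          have := hs (Fin.natAdd n j)
          rwa [Fin.append_right] at this
      obtain ⟨Θ', h1, h2⟩ := keyDL (hψt j) hd hsupp hsatj
      exact ⟨Θ', h1, h2⟩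
  | some a =>
    cases hχ with
    | noTau n af Δf ψv hnone hstepv hcovv hψv =>
      obtain ⟨i, hai, hΔi⟩ := hcovv a Δ hstep
      subst hΔi
      have hsati : Sat (Form.dia (af i) (ψv i)) Θ := by
        cases hsat with | conj hs => exact hs i
      rw [hai] at hsati
      cases hsati with
      | dia hweak hsat2 =>
        obtain ⟨Θ', h1, h2⟩ := keyDL (hψv i) hd hsupp hsat2
        exact ⟨Θ', weakA_tau hweak h1, h2⟩
    | tau n m af Δf ψv Θf ψt hsome hstepv hcovv hstept hcovt hψv hψt =>
      obtain ⟨i, hai, hΔi⟩ := hcovv a Δ hstep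
      subst hΔi
      have hsati : Sat (Form.dia (af i) (ψv i)) Θ := by
        cases hsat with
        | conj hs =>
          have := hs (Fin.castAdd m i)
          rwa [Fin.append_left] at this
      rw [hai] at hsati
      cases hsati with
      | dia hweak hsat2 =>
        obtain ⟨Θ', h1, h2⟩ := keyDL (hψv i) hd hsupp hsat2
        exact ⟨Θ', weakA_tau hweak h1, h2⟩

lemma RF_sim : IsSimulation (RF (A := A)) := by
  intro s Θ α Δ hR hstep
  obtain ⟨hwf, φ, hχ, hsat⟩ := hR
  obtain ⟨hd, hsupp⟩ := step_preserve hstep hwf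
  cases α with
  | none =>
    cases hχ with
    | noTau n af Δf ψv hnone hstepv hcovv hψv => exact absurd hstep (hnone Δ)
    | tau n m af Δf ψv Θf ψt hsome hstepv hcovv hstept hcovt hψv hψt =>
      obtain ⟨j, hj⟩ := hcovt Δ hstep
      subst hj
      have hsatj : Sat (ψt j) Θ := by
        cases hsat with
        | conj hs =>
          have := hs (Fin.natAdd n j)
          rwa [Fin.append_right] at this
      obtain ⟨Θ', h1, h2⟩ := keyDF (hψt j) hd hsupp hsatj
      exact ⟨Θ', h1, h2⟩
  | some a =>
    cases hχ with
    | noTau n af Δf ψv hnone hstepv hcovv hψv =>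
      obtain ⟨i, hai, hΔi⟩ := hcovv a Δ hstep
      subst hΔi
      have hsati : Sat (Form.dia (af i) (ψv i)) Θ := by
        cases hsat with
        | conj hs =>
          have := hs (Fin.castSucc i)
          rwa [Fin.snoc_castSucc] at this
      rw [hai] at hsati
      cases hsati with
      | dia hweak hsat2 =>
        obtain ⟨Θ', h1, h2⟩ := keyDF (hψv i) hd hsupp hsat2
        exact ⟨Θ', weakA_tau hweak h1, h2⟩
    | tau n m af Δf ψv Θf ψt hsome hstepv hcovv hstept hcovt hψv hψt =>
      obtain ⟨i, hai, hΔi⟩ := hcovv a Δ hstep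
      subst hΔi
      have hsati : Sat (Form.dia (af i) (ψv i)) Θ := by
        cases hsat with
        | conj hs =>
          have := hs (Fin.castAdd m i)
          rwa [Fin.append_left] at this
      rw [hai] at hsati
      cases hsati with
      | dia hweak hsat2 =>
        obtain ⟨Θ', h1, h2⟩ := keyDF (hψv i) hd hsupp hsat2
        exact ⟨Θ', weakA_tau hweak h1, h2⟩

lemma RF_fsim : IsFailureSim (RF (A := A)) := by
  refine ⟨RF_sim, ?_⟩
  intro s Θ X hR href
  obtain ⟨hwf, φ, hχ, hsat⟩ := hR
  cases hχ with
  | tau n m af Δf ψv Θf ψt hsome hstepv hcovv hstept hcovt hψv hψt =>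
    obtain ⟨Θτ, hτ⟩ := hsome
    exact absurd hτ (href.1 Θτ)
  | noTau n af Δf ψv hnone hstepv hcovv hψv =>
    have hsatref : Sat (Form.ref {b : A | ∀ Θ, ¬ Step s (some b) Θ}) Θ := by
      cases hsat with
      | conj hs =>
        have := hs (Fin.last n)
        rwa [Fin.snoc_last] at this
    cases hsatref with
    | ref h1 h2 =>
      refine ⟨_, h1, fun t htm => ?_⟩
      obtain ⟨hta, htb⟩ := h2 t htm
      exact ⟨hta, fun a ha Θ' => htb a (fun Θ'' => href.2 a ha Θ'') Θ'⟩

end Aux6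

/-- Theorem 6.9: the logical preorders imply the simulation preorders. -/
theorem logical_implies_simulation (A : Type) [Fintype A]
    (P Q : PCSP A) (hP : PWF P) (hQ : PWF Q) :
    (LPre P Q → SimPre P Q) ∧ (FPre P Q → FSimPre P Q) := by
  constructor
  · intro hL
    obtain ⟨hdP, hwP⟩ := interp_isDist' hP
    obtain ⟨ψ, hχ, hwff, hnr⟩ :=
      charDL_exists hdP (fun t ht => charSL_exists (sizeS t) t le_rfl (hwP t ht))
    have hsatP : Sat ψ P.interp :=
      satDL_self hχ (fun t _ φ' hφ' => satSL_self (sizeS t) t le_rfl φ' hφ')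
        Relation.ReflTransGen.refl
    have hsatQ := hL ψ hwff hnr hsatP
    obtain ⟨Θ, h1, h2⟩ := keyDL hχ hdP hwP hsatQ
    exact ⟨Θ, h1, lift_mono (fun s Θ h => ⟨RL, RL_sim, h⟩) h2⟩
  · intro hF
    obtain ⟨hdQ, hwQ⟩ := interp_isDist' hQ
    obtain ⟨ψ, hχ, hwff⟩ :=
      charD_exists hdQ (fun t ht => charS_exists (sizeS t) t le_rfl (hwQ t ht))
    have hsatQ : Sat ψ Q.interp :=
      satD_self hχ (fun t _ φ' hφ' => satS_self (sizeS t) t le_rfl φ' hφ')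
        Relation.ReflTransGen.refl
    have hsatP := hF ψ hwff hsatQ
    obtain ⟨Θ, h1, h2⟩ := keyDF hχ hdQ hwQ hsatP
    exact ⟨Θ, h1, lift_mono (fun s Θ h => ⟨RF, RF_fsim, h⟩) h2⟩

end PaperPCSP
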